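/- arXiv:1810.08516 — 2 statements merged into one kernel-verified Lean document; each statement's English description precedes it below -/
import Mathlib

section
/- For all real a > 0, b > 0, δ > 0 and c ≥ 0, the integral K₁(a,b,c,δ) = ∫₀^∞ x^c e^{−δx} [1 − (1 + b + bx + b²x²/2) e^{−bx}/(1+b)]^{a−1} dx converges and equals the sum Σ_{i=0}^∞ Σ_{j=0}^{i} Σ_{k=0}^{j} Σ_{l=0}^{k} C(a−1, i) C(i, j) C(j, k) C(k, l) (−1)^i b^j (b/2)^l Γ(c+k+l+1) / [ (1+b)^i (b i + δ)^{c+k+l+1} ], where the series over i converges. -/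
open Real MeasureTheory Set Filter Topology

/-- The xgamma CDF bracket: `U θ x = 1 - (1 + θ + θx + θ²x²/2) e^{-θx}/(1+θ)`. -/
noncomputable def U (θ x : ℝ) : ℝ :=
  1 - (1 + θ + θ * x + θ ^ 2 * x ^ 2 / 2) * Real.exp (-θ * x) / (1 + θ)

/-- Generalized binomial coefficient `C(a, i) = a(a-1)⋯(a-i+1)/i!`. -/
noncomputable def genChoose (a : ℝ) (i : ℕ) : ℝ :=
  (∏ j ∈ Finset.range i, (a - j)) / (Nat.factorial i)

/-- The `i`-th term (a triple finite sum) of the series for `K₁(a,b,c,δ)`. -/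
noncomputable def K1term (a b c δ : ℝ) (i : ℕ) : ℝ :=
  ∑ j ∈ Finset.range (i + 1), ∑ k ∈ Finset.range (j + 1), ∑ l ∈ Finset.range (k + 1),
    genChoose (a - 1) i * (i.choose j) * (j.choose k) * (k.choose l) *
      (-1 : ℝ) ^ i * b ^ j * (b / 2) ^ l * Real.Gamma (c + k + l + 1) /
      ((1 + b) ^ i * (b * i + δ) ^ (c + (k : ℝ) + l + 1))

/-! ### Auxiliary material -/

/-- The complementary CDF factor `T`. -/
noncomputable def Tf (b x : ℝ) : ℝ :=
  (1 + b + b * x + b ^ 2 * x ^ 2 / 2) * Real.exp (-b * x) / (1 + b)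

lemma U_eq (b x : ℝ) : U b x = 1 - Tf b x := rfl

/-- Signed generalized binomial coefficient. -/
noncomputable def cc (a : ℝ) (i : ℕ) : ℝ := genChoose (a - 1) i * (-1) ^ i

lemma cpow_deriv (q : ℂ) {z : ℂ} (hz : z ∈ Metric.ball (0:ℂ) 1) :
    HasDerivAt (fun w : ℂ => (1 - w) ^ q) (q * (1 - z) ^ (q - 1) * (-1)) z := by
  have hsp : (1 - z) ∈ Complex.slitPlane := by
    refine Complex.mem_slitPlane_iff.mpr (Or.inl ?_)
    simp only [Complex.sub_re, Complex.one_re]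
    have : |z.re| < 1 := lt_of_le_of_lt (Complex.abs_re_le_norm z) (by simpa using hz)
    linarith [abs_lt.mp this]
  exact ((hasDerivAt_id z).const_sub 1).cpow_const hsp

lemma iteratedDeriv_one_sub_cpow (p : ℝ) (n : ℕ) :
    ∀ z ∈ Metric.ball (0:ℂ) 1, iteratedDeriv n (fun w : ℂ => (1 - w) ^ (p:ℂ)) z
      = (∏ j ∈ Finset.range n, ((p:ℂ) - j)) * (-1) ^ n * (1 - z) ^ ((p:ℂ) - n) := by
  induction n with
  | zero => intro z hz; simp
  | succ n ih =>
    intro z hz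
    rw [iteratedDeriv_succ]
    have hev : iteratedDeriv n (fun w : ℂ => (1 - w) ^ (p:ℂ))
        =ᶠ[nhds z] fun w => (∏ j ∈ Finset.range n, ((p:ℂ) - j)) * (-1) ^ n * (1 - w) ^ ((p:ℂ) - n) :=
      Filter.eventuallyEq_of_mem (Metric.isOpen_ball.mem_nhds hz) ih
    rw [hev.deriv_eq]
    have hd := (cpow_deriv ((p:ℂ) - n) hz).const_mul
      ((∏ j ∈ Finset.range n, ((p:ℂ) - j)) * (-1) ^ n)
    rw [hd.deriv]
    have he : (p:ℂ) - n - 1 = (p:ℂ) - (n + 1 : ℕ) := by push_cast; ring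
    rw [he, Finset.prod_range_succ]
    push_cast
    ring

/-- The binomial series for `(1-t)^p`, `0 ≤ t < 1`. -/
lemma hasSum_one_sub_rpow (p : ℝ) {t : ℝ} (h0 : 0 ≤ t) (h1 : t < 1) :
    HasSum (fun n : ℕ => genChoose p n * (-1) ^ n * t ^ n) ((1 - t) ^ p) := by
  have hdiff : DifferentiableOn ℂ (fun w : ℂ => (1 - w) ^ (p:ℂ)) (Metric.ball 0 1) :=
    fun z hz => (cpow_deriv (p:ℂ) hz).differentiableAt.differentiableWithinAt
  have hz : (t:ℂ) ∈ Metric.ball (0:ℂ) 1 := by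
    simp only [Metric.mem_ball, dist_zero_right, Complex.norm_real, Real.norm_eq_abs]
    rwa [abs_of_nonneg h0]
  have H := Complex.hasSum_taylorSeries_on_ball hdiff hz
  have Hval : ((1:ℂ) - t) ^ (p:ℂ) = (((1 - t) ^ p : ℝ) : ℂ) := by
    rw [Complex.ofReal_cpow (by linarith), Complex.ofReal_sub, Complex.ofReal_one]
  rw [Hval] at H
  rw [← Complex.hasSum_ofReal]
  convert H using 2 with n
  · rfl
  rw [iteratedDeriv_one_sub_cpow p n 0 (by simp)]
  simp only [sub_zero, Complex.one_cpow, smul_eq_mul, mul_one, genChoose]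
  push_cast
  ring

lemma exp_quad_le {y : ℝ} (hy : 0 ≤ y) : 1 + y + y ^ 2 / 2 ≤ Real.exp y := by
  have h := Real.sum_le_exp_of_nonneg hy 3
  have he : ∑ i ∈ Finset.range 3, y ^ i / (Nat.factorial i) = 1 + y + y ^ 2 / 2 := by
    simp [Finset.sum_range_succ, Nat.factorial]
  rw [he] at h
  exact h

lemma Tf_pos {b x : ℝ} (hb : 0 < b) (hx : 0 ≤ x) : 0 < Tf b x := by
  unfold Tf; positivity

lemma Tf_lt_one {b x : ℝ} (hb : 0 < b) (hx : 0 < x) : Tf b x < 1 := by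
  unfold Tf
  rw [div_lt_one (by linarith)]
  have key : 1 + b * x + (b * x) ^ 2 / 2 ≤ Real.exp (b * x) := exp_quad_le (by positivity)
  have hlt : 1 + b + b * x + b ^ 2 * x ^ 2 / 2 < (1 + b) * Real.exp (b * x) := by
    nlinarith [Real.exp_pos (b * x), mul_pos hb hx]
  calc (1 + b + b * x + b ^ 2 * x ^ 2 / 2) * Real.exp (-b * x)
      < (1 + b) * Real.exp (b * x) * Real.exp (-b * x) := by
        apply mul_lt_mul_of_pos_right hlt (Real.exp_pos _)
    _ = 1 + b := by rw [mul_assoc, ← Real.exp_add]; simp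

lemma U_lower {b x : ℝ} (hb : 0 < b) (hx : 0 ≤ x) :
    b / (1 + b) * (1 - Real.exp (-b * x)) ≤ U b x := by
  rw [U_eq]
  unfold Tf
  have h1b : (0:ℝ) < 1 + b := by linarith
  rw [div_mul_eq_mul_div, div_le_iff₀ h1b]
  have expand : (1 - (1 + b + b * x + b ^ 2 * x ^ 2 / 2) * Real.exp (-b * x) / (1 + b)) * (1 + b)
      = (1 + b) - (1 + b + b * x + b ^ 2 * x ^ 2 / 2) * Real.exp (-b * x) := by
    field_simp
  rw [expand]
  have key : (1 + b * x + (b * x) ^ 2 / 2) * Real.exp (-b * x) ≤ 1 := by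
    have h := exp_quad_le (show (0:ℝ) ≤ b * x by positivity)
    have h2 : Real.exp (-b * x) = (Real.exp (b * x))⁻¹ := by
      rw [← Real.exp_neg]; ring_nf
    rw [h2, mul_inv_le_iff₀ (Real.exp_pos _), one_mul]
    exact h
  nlinarith [Real.exp_pos (-b * x), key]

lemma one_sub_exp_lower {b x : ℝ} (hb : 0 < b) (hx : 0 ≤ x) :
    (1 - Real.exp (-b)) * min x 1 ≤ 1 - Real.exp (-b * x) := by
  rcases le_total x 1 with h | h
  · rw [min_eq_left h]
    have hconv := convexOn_exp.2 (Set.mem_univ (0:ℝ)) (Set.mem_univ (-b))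
      (by linarith : (0:ℝ) ≤ 1 - x) hx (by ring)
    simp only [smul_eq_mul, mul_zero, zero_add, Real.exp_zero, mul_one] at hconv
    have hxb : x * -b = -b * x := by ring
    rw [hxb] at hconv
    nlinarith [hconv]
  · rw [min_eq_right h]
    have : Real.exp (-b * x) ≤ Real.exp (-b) := by
      apply Real.exp_le_exp.mpr; nlinarith
    linarith

lemma U_pos {b x : ℝ} (hb : 0 < b) (hx : 0 < x) : 0 < U b x := by
  rw [U_eq]; linarith [Tf_lt_one hb hx]

lemma U_le_one {b x : ℝ} (hb : 0 < b) (hx : 0 ≤ x) : U b x ≤ 1 := by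
  rw [U_eq]; linarith [Tf_pos hb hx]




lemma integrableOn_rpow_exp {s r : ℝ} (hs : -1 < s) (hr : 0 < r) :
    IntegrableOn (fun x : ℝ => x ^ s * Real.exp (-r * x)) (Set.Ioi 0) := by
  have h := integrableOn_rpow_mul_exp_neg_mul_rpow (p := 1) hs one_pos hr
  simpa [Real.rpow_one] using h

lemma continuous_Tf {b : ℝ} (hb : 0 < b) : Continuous (Tf b) := by
  unfold Tf
  fun_prop (disch := intros; positivity)

lemma continuous_U {b : ℝ} (hb : 0 < b) : Continuous (U b) := by
  unfold U
  fun_prop (disch := intros; positivity)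


lemma aesm_f (a b c δ : ℝ) (hb : 0 < b) :
    AEStronglyMeasurable (fun x : ℝ => x ^ c * Real.exp (-δ * x) * (U b x) ^ (a - 1))
      (volume.restrict (Set.Ioi 0)) := by
  apply ContinuousOn.aestronglyMeasurable _ measurableSet_Ioi
  apply ContinuousOn.mul
  · apply ContinuousOn.mul
    · exact fun x hx => (Real.continuousAt_rpow_const x c
        (Or.inl (ne_of_gt hx))).continuousWithinAt
    · fun_prop
  · intro x hx
    apply ContinuousWithinAt.rpow_const
    · exact ((continuous_U hb).continuousAt).continuousWithinAt
    · exact Or.inl (ne_of_gt (U_pos hb hx))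

lemma f_integrable (a b c δ : ℝ) (ha : 0 < a) (hb : 0 < b) (hδ : 0 < δ) (hc : 0 ≤ c) :
    IntegrableOn (fun x : ℝ => x ^ c * Real.exp (-δ * x) * (U b x) ^ (a - 1))
      (Set.Ioi 0) := by
  set κ := b / (1 + b) * (1 - Real.exp (-b)) with hκdef
  have hκ : 0 < κ := by
    apply mul_pos (by positivity)
    have : Real.exp (-b) < 1 := Real.exp_lt_one_iff.mpr (by linarith)
    linarith
  have hg : IntegrableOn (fun x : ℝ =>
      κ ^ (a-1) * (x ^ (c+a-1) * Real.exp (-δ * x))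
      + (κ ^ (a-1) + 1) * (x ^ c * Real.exp (-δ * x))) (Set.Ioi 0) := by
    exact ((integrableOn_rpow_exp (by linarith) hδ).const_mul _).add
      ((integrableOn_rpow_exp (by linarith) hδ).const_mul _)
  apply Integrable.mono' hg (aesm_f a b c δ hb)
  filter_upwards [ae_restrict_mem measurableSet_Ioi] with x hx
  have hx0 : (0:ℝ) < x := hx
  have hmin : 0 < min x 1 := lt_min hx0 one_pos
  have hUκ : κ * min x 1 ≤ U b x := by
    calc κ * min x 1 = b / (1 + b) * ((1 - Real.exp (-b)) * min x 1) := by rw [hκdef]; ring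
      _ ≤ b / (1 + b) * (1 - Real.exp (-b * x)) := by
          apply mul_le_mul_of_nonneg_left (one_sub_exp_lower hb hx0.le) (by positivity)
      _ ≤ U b x := U_lower hb hx0.le
  have hU1 : U b x ≤ 1 := U_le_one hb hx0.le
  have hU0 : 0 < U b x := U_pos hb hx0
  have hUb : (U b x) ^ (a-1) ≤ κ ^ (a-1) * ((min x 1) ^ (a-1)) + 1 := by
    rcases le_or_gt 0 (a-1) with h | h
    · have h1 : (U b x) ^ (a-1) ≤ 1 := Real.rpow_le_one hU0.le hU1 h
      have h2 : 0 ≤ κ ^ (a-1) * ((min x 1) ^ (a-1)) := by positivity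
      linarith
    · have h1 : (U b x) ^ (a-1) ≤ (κ * min x 1) ^ (a-1) :=
        Real.rpow_le_rpow_of_nonpos (by positivity) hUκ h.le
      rw [Real.mul_rpow hκ.le hmin.le] at h1
      linarith
  have hminb : (min x 1) ^ (a-1) ≤ x ^ (a-1) + 1 := by
    rcases min_cases x 1 with ⟨he, _⟩ | ⟨he, _⟩ <;> rw [he]
    · nlinarith [Real.rpow_nonneg hx0.le (a-1), (le_refl (x ^ (a-1)))]
    · rw [Real.one_rpow]
      nlinarith [Real.rpow_nonneg hx0.le (a-1)]
  have hnn : 0 ≤ x ^ c * Real.exp (-δ * x) * (U b x) ^ (a - 1) := by positivity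
  rw [Real.norm_of_nonneg hnn]
  have hwx : 0 ≤ x ^ c * Real.exp (-δ * x) := by positivity
  calc x ^ c * Real.exp (-δ * x) * (U b x) ^ (a - 1)
      ≤ x ^ c * Real.exp (-δ * x) * (κ ^ (a-1) * ((min x 1) ^ (a-1)) + 1) := by
        exact mul_le_mul_of_nonneg_left hUb hwx
    _ ≤ x ^ c * Real.exp (-δ * x) * (κ ^ (a-1) * (x ^ (a-1) + 1) + 1) := by
        apply mul_le_mul_of_nonneg_left _ hwx
        have : 0 ≤ κ ^ (a-1) := by positivity
        nlinarith [hminb]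
    _ = κ ^ (a-1) * (x ^ (c+a-1) * Real.exp (-δ * x))
        + (κ ^ (a-1) + 1) * (x ^ c * Real.exp (-δ * x)) := by
        have hxc : x ^ (c+a-1) = x ^ c * x ^ (a-1) := by
          rw [← Real.rpow_add hx0]; ring_nf
        rw [hxc]; ring

lemma cc_succ (a : ℝ) (i : ℕ) :
    cc a (i + 1) = cc a i * (((i:ℝ) + 1 - a) / ((i:ℝ) + 1)) := by
  unfold cc genChoose
  rw [Finset.prod_range_succ, Nat.factorial_succ]
  have h1 : ((Nat.factorial i : ℝ)) ≠ 0 := Nat.cast_ne_zero.mpr (Nat.factorial_ne_zero i)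
  have h2 : ((i:ℝ) + 1) ≠ 0 := by positivity
  push_cast
  field_simp
  ring

lemma cc_tail (a : ℝ) (k : ℕ) :
    ∃ r : ℝ, 0 ≤ r ∧ cc a (k + ⌈a⌉₊) = r * cc a ⌈a⌉₊ := by
  induction k with
  | zero => exact ⟨1, zero_le_one, by simp⟩
  | succ k ih =>
    obtain ⟨r, hr0, hre⟩ := ih
    have hM : (a:ℝ) ≤ (⌈a⌉₊ : ℝ) := Nat.le_ceil a
    refine ⟨r * ((((k + ⌈a⌉₊ :ℕ):ℝ) + 1 - a) / (((k + ⌈a⌉₊:ℕ):ℝ) + 1)), ?_, ?_⟩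
    · apply mul_nonneg hr0
      apply div_nonneg _ (by positivity)
      push_cast; linarith
    · have : k + 1 + ⌈a⌉₊ = (k + ⌈a⌉₊) + 1 := by omega
      rw [this, cc_succ, hre]
      ring

lemma hasSum_G (a b c δ : ℝ) (hb : 0 < b) {x : ℝ} (hx : 0 < x) :
    HasSum (fun i : ℕ => cc a i * (x ^ c * Real.exp (-δ * x) * Tf b x ^ i))
      (x ^ c * Real.exp (-δ * x) * (U b x) ^ (a - 1)) := by
  have h1 := hasSum_one_sub_rpow (a - 1) (Tf_pos hb hx.le).le (Tf_lt_one hb hx)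
  rw [← U_eq] at h1
  have h2 := h1.mul_left (x ^ c * Real.exp (-δ * x))
  convert h2 using 2 with i
  · rfl
  unfold cc
  ring

lemma aesm_G (a b c δ : ℝ) (hb : 0 < b) (i : ℕ) :
    AEStronglyMeasurable (fun x : ℝ => cc a i * (x ^ c * Real.exp (-δ * x) * Tf b x ^ i))
      (volume.restrict (Set.Ioi 0)) := by
  apply ContinuousOn.aestronglyMeasurable _ measurableSet_Ioi
  apply ContinuousOn.mul continuousOn_const
  apply ContinuousOn.mul
  · apply ContinuousOn.mul
    · exact fun x hx => (Real.continuousAt_rpow_const x c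
        (Or.inl (ne_of_gt hx))).continuousWithinAt
    · fun_prop
  · exact ((continuous_Tf hb).pow i).continuousOn

lemma G_integrable (a b c δ : ℝ) (hb : 0 < b) (hδ : 0 < δ) (hc : 0 ≤ c) (i : ℕ) :
    IntegrableOn (fun x : ℝ => cc a i * (x ^ c * Real.exp (-δ * x) * Tf b x ^ i))
      (Set.Ioi 0) := by
  apply Integrable.mono' ((integrableOn_rpow_exp (by linarith) hδ).const_mul |cc a i|)
    (aesm_G a b c δ hb i)
  filter_upwards [ae_restrict_mem measurableSet_Ioi] with x hx
  have hx0 : (0:ℝ) < x := hx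
  have hT0 : 0 < Tf b x := Tf_pos hb hx0.le
  have hT1 : Tf b x ≤ 1 := (Tf_lt_one hb hx0).le
  have hTp : Tf b x ^ i ≤ 1 := pow_le_one₀ hT0.le hT1
  rw [Real.norm_eq_abs, abs_mul]
  have h2 : |x ^ c * Real.exp (-δ * x) * Tf b x ^ i| ≤ x ^ c * Real.exp (-δ * x) := by
    rw [abs_of_nonneg (by positivity)]
    have hwnn : 0 ≤ x ^ c * Real.exp (-δ * x) := by positivity
    calc x ^ c * Real.exp (-δ * x) * Tf b x ^ i
        ≤ x ^ c * Real.exp (-δ * x) * 1 := mul_le_mul_of_nonneg_left hTp hwnn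
      _ = x ^ c * Real.exp (-δ * x) := mul_one _
  calc |cc a i| * |x ^ c * Real.exp (-δ * x) * Tf b x ^ i|
      ≤ |cc a i| * (x ^ c * Real.exp (-δ * x)) :=
        mul_le_mul_of_nonneg_left h2 (abs_nonneg _)
    _ = |cc a i| * (x ^ c * Real.exp (-δ * x)) := rfl

lemma stepB (a b c δ : ℝ) (ha : 0 < a) (hb : 0 < b) (hδ : 0 < δ) (hc : 0 ≤ c) :
    HasSum (fun i : ℕ => ∫ x in Set.Ioi 0, cc a i * (x ^ c * Real.exp (-δ * x) * Tf b x ^ i))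
      (∫ x in Set.Ioi 0, x ^ c * Real.exp (-δ * x) * (U b x) ^ (a - 1)) := by
  set M := ⌈a⌉₊ with hM
  set G : ℕ → ℝ → ℝ := fun i x => cc a i * (x ^ c * Real.exp (-δ * x) * Tf b x ^ i) with hG
  set f : ℝ → ℝ := fun x => x ^ c * Real.exp (-δ * x) * (U b x) ^ (a - 1) with hf
  set h : ℝ → ℝ := fun x => f x - ∑ i ∈ Finset.range M, G i x with hh
  have hGint : ∀ i, IntegrableOn (G i) (Set.Ioi 0) := G_integrable a b c δ hb hδ hc
  have hfint : IntegrableOn f (Set.Ioi 0) := f_integrable a b c δ ha hb hδ hc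
  have hhint : IntegrableOn h (Set.Ioi 0) :=
    hfint.sub (integrable_finset_sum _ fun i _ => hGint i)
  have htail : ∀ x ∈ Set.Ioi (0:ℝ), HasSum (fun k => G (k + M) x) (h x) := fun x hx =>
    (hasSum_nat_add_iff' M).mpr (hasSum_G a b c δ hb hx)
  have habs : ∀ x ∈ Set.Ioi (0:ℝ), HasSum (fun k => ‖G (k + M) x‖) |h x| := by
    intro x hx
    have hx0 : (0:ℝ) < x := hx
    have hwpos : 0 < x ^ c * Real.exp (-δ * x) * Tf b x ^ 1 := by
      have := Tf_pos hb hx0.le; positivity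
    rcases le_or_gt 0 (cc a M) with hs | hs
    · have hnn : ∀ k, 0 ≤ G (k + M) x := by
        intro k
        obtain ⟨r, hr0, hre⟩ := cc_tail a k
        rw [hG]; simp only
        rw [← hM] at hre
        rw [hre]
        have hwnn : 0 ≤ x ^ c * Real.exp (-δ * x) * Tf b x ^ (k + M) := by
          have := Tf_pos hb hx0.le; positivity
        exact mul_nonneg (mul_nonneg hr0 hs) hwnn
      have hh0 : 0 ≤ h x := hasSum_mono hasSum_zero (htail x hx) hnn
      rw [abs_of_nonneg hh0]
      have he : (fun k => ‖G (k + M) x‖) = fun k => G (k + M) x :=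
        funext fun k => Real.norm_of_nonneg (hnn k)
      rw [he]
      exact htail x hx
    · have hnp : ∀ k, G (k + M) x ≤ 0 := by
        intro k
        obtain ⟨r, hr0, hre⟩ := cc_tail a k
        rw [hG]; simp only
        rw [← hM] at hre
        rw [hre]
        have hwnn : 0 ≤ x ^ c * Real.exp (-δ * x) * Tf b x ^ (k + M) := by
          have := Tf_pos hb hx0.le; positivity
        exact mul_nonpos_of_nonpos_of_nonneg (mul_nonpos_of_nonneg_of_nonpos hr0 hs.le) hwnn
      have hh0 : h x ≤ 0 := hasSum_mono (htail x hx) hasSum_zero hnp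
      rw [abs_of_nonpos hh0]
      have he : (fun k => ‖G (k + M) x‖) = fun k => -G (k + M) x :=
        funext fun k => Real.norm_of_nonpos (hnp k)
      rw [he]
      exact (htail x hx).neg
  -- summability of the integrals of norms
  have hmeas : ∀ k : ℕ, AEMeasurable (fun x => ENNReal.ofReal ‖G (k + M) x‖)
      (volume.restrict (Set.Ioi 0)) := fun k =>
    ENNReal.measurable_ofReal.comp_aemeasurable
      ((hGint (k + M)).aestronglyMeasurable.norm.aemeasurable)
  have hlt : ∑' k : ℕ, ∫⁻ x in Set.Ioi 0, ENNReal.ofReal ‖G (k + M) x‖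
      = ∫⁻ x in Set.Ioi 0, ENNReal.ofReal |h x| := by
    rw [← lintegral_tsum hmeas]
    apply lintegral_congr_ae
    filter_upwards [ae_restrict_mem measurableSet_Ioi] with x hx
    have hsx := habs x hx
    rw [← ENNReal.ofReal_tsum_of_nonneg (fun k => norm_nonneg _) hsx.summable, hsx.tsum_eq]
  have hfin : ∫⁻ x in Set.Ioi 0, ENNReal.ofReal |h x| < ⊤ := by
    have h1 := hhint.hasFiniteIntegral
    rw [hasFiniteIntegral_iff_norm] at h1
    simpa [Real.norm_eq_abs] using h1
  have hsum' : Summable (fun k : ℕ =>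
      (∫⁻ x in Set.Ioi 0, ENNReal.ofReal ‖G (k + M) x‖).toReal) :=
    ENNReal.summable_toReal (by rw [hlt]; exact hfin.ne)
  have hsum : Summable (fun k : ℕ => ∫ x in Set.Ioi 0, ‖G (k + M) x‖) := by
    apply hsum'.congr
    intro k
    rw [integral_eq_lintegral_of_nonneg_ae (ae_of_all _ fun x => norm_nonneg _)
      (hGint (k + M)).aestronglyMeasurable.norm]
  have H := MeasureTheory.hasSum_integral_of_summable_integral_norm
    (fun k : ℕ => hGint (k + M)) hsum
  have Hrw : ∫ x in Set.Ioi 0, (∑' k : ℕ, G (k + M) x) = ∫ x in Set.Ioi 0, h x := by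
    apply integral_congr_ae
    filter_upwards [ae_restrict_mem measurableSet_Ioi] with x hx
    exact (htail x hx).tsum_eq
  rw [Hrw] at H
  have Hh : ∫ x in Set.Ioi 0, h x
      = (∫ x in Set.Ioi 0, f x) - ∑ i ∈ Finset.range M, ∫ x in Set.Ioi 0, G i x := by
    rw [hh]
    rw [integral_sub hfint (integrable_finset_sum _ fun i _ => hGint i)]
    rw [integral_finset_sum _ fun i _ => hGint i]
  rw [Hh] at H
  exact (hasSum_nat_add_iff' M).mp H

lemma expand_pt (a b c δ : ℝ) (hb : 0 < b) (i : ℕ) {x : ℝ} (hx : 0 < x) :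
    cc a i * (x ^ c * Real.exp (-δ * x) * Tf b x ^ i)
      = ∑ j ∈ Finset.range (i + 1), ∑ k ∈ Finset.range (j + 1), ∑ l ∈ Finset.range (k + 1),
        (cc a i * (i.choose j) * (j.choose k) * (k.choose l) * b ^ j * (b / 2) ^ l
            / (1 + b) ^ i)
          * (x ^ (c + (k : ℝ) + l) * Real.exp (-(b * i + δ) * x)) := by
  have h1b : (0:ℝ) < 1 + b := by linarith
  have hexp : Real.exp (-b * x) ^ i = Real.exp (-(b * i) * x) := by
    rw [← Real.exp_nat_mul]; congr 1; push_cast; ring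
  have hP : (1 + b + b * x + b ^ 2 * x ^ 2 / 2) ^ i
      = ∑ j ∈ Finset.range (i + 1),
          (b * (1 + x + b * x ^ 2 / 2)) ^ j * (i.choose j) := by
    have hpe : (1 + b + b * x + b ^ 2 * x ^ 2 / 2) = b * (1 + x + b * x ^ 2 / 2) + 1 := by
      ring
    rw [hpe, add_pow]
    exact Finset.sum_congr rfl fun j hj => by rw [one_pow, mul_one]
  have hR : ∀ j : ℕ, (1 + x + b * x ^ 2 / 2) ^ j
      = ∑ k ∈ Finset.range (j + 1), (x + b * x ^ 2 / 2) ^ k * (j.choose k) := by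
    intro j
    have hpe : (1 + x + b * x ^ 2 / 2) = (x + b * x ^ 2 / 2) + 1 := by ring
    rw [hpe, add_pow]
    exact Finset.sum_congr rfl fun k hk => by rw [one_pow, mul_one]
  have hS : ∀ k : ℕ, (x + b * x ^ 2 / 2) ^ k
      = ∑ l ∈ Finset.range (k + 1), (b / 2) ^ l * x ^ (k + l) * (k.choose l) := by
    intro k
    have hpe : (x + b * x ^ 2 / 2) = (b * x ^ 2 / 2) + x := by ring
    rw [hpe, add_pow]
    apply Finset.sum_congr rfl
    intro l hl
    have hlk : l ≤ k := Nat.lt_succ_iff.mp (Finset.mem_range.mp hl)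
    have h1 : (b * x ^ 2 / 2) ^ l = (b / 2) ^ l * x ^ (2 * l) := by
      rw [pow_mul]; ring
    rw [h1]
    have h2 : x ^ (2 * l) * x ^ (k - l) = x ^ (k + l) := by
      rw [← pow_add]
      congr 1
      omega
    calc (b / 2) ^ l * x ^ (2 * l) * x ^ (k - l) * (k.choose l)
        = (b / 2) ^ l * (x ^ (2 * l) * x ^ (k - l)) * (k.choose l) := by ring
      _ = (b / 2) ^ l * x ^ (k + l) * (k.choose l) := by rw [h2]
  unfold Tf
  rw [div_pow, mul_pow, hexp, hP]
  rw [Finset.sum_mul, Finset.sum_div, Finset.mul_sum, Finset.mul_sum]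
  apply Finset.sum_congr rfl
  intro j hj
  rw [mul_pow, hR j, Finset.mul_sum]
  simp only [Finset.mul_sum, Finset.sum_mul, Finset.sum_div]
  apply Finset.sum_congr rfl
  intro k hk
  rw [hS k]
  simp only [Finset.mul_sum, Finset.sum_mul, Finset.sum_div]
  apply Finset.sum_congr rfl
  intro l hl
  have hxp : x ^ (c + (k : ℝ) + (l : ℝ)) = x ^ c * (x : ℝ) ^ (k + l : ℕ) := by
    rw [← Real.rpow_natCast x (k + l), ← Real.rpow_add hx]
    congr 1
    push_cast
    ring
  have hee : Real.exp (-δ * x) * Real.exp (-(b * i) * x) = Real.exp (-(b * i + δ) * x) := by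
    rw [← Real.exp_add]; congr 1; ring
  rw [hxp]
  rw [← hee]
  field_simp

lemma I_eq (a b c δ : ℝ) (hb : 0 < b) (hδ : 0 < δ) (hc : 0 ≤ c) (i : ℕ) :
    ∫ x in Set.Ioi 0, cc a i * (x ^ c * Real.exp (-δ * x) * Tf b x ^ i)
      = K1term a b c δ i := by
  have hbi : (0:ℝ) < b * i + δ := by positivity
  have h1b : (0:ℝ) < 1 + b := by linarith
  have hterm_int : ∀ (A : ℝ) (k l : ℕ), IntegrableOn
      (fun x : ℝ => A * (x ^ (c + (k : ℝ) + l) * Real.exp (-(b * i + δ) * x)))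
      (Set.Ioi 0) := by
    intro A k l
    apply Integrable.const_mul
    apply integrableOn_rpow_exp _ hbi
    have hk : (0:ℝ) ≤ k := Nat.cast_nonneg k
    have hl : (0:ℝ) ≤ l := Nat.cast_nonneg l
    linarith
  have hval : ∀ (k l : ℕ),
      ∫ x in Set.Ioi 0, x ^ (c + (k : ℝ) + l) * Real.exp (-(b * i + δ) * x)
        = (1 / (b * i + δ)) ^ (c + (k : ℝ) + l + 1) * Real.Gamma (c + (k : ℝ) + l + 1) := by
    intro k l
    have hk : (0:ℝ) ≤ k := Nat.cast_nonneg k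
    have hl : (0:ℝ) ≤ l := Nat.cast_nonneg l
    have hs : (0:ℝ) < c + (k : ℝ) + l + 1 := by linarith
    have h := integral_rpow_mul_exp_neg_mul_Ioi hs hbi
    rw [← h]
    apply setIntegral_congr_fun measurableSet_Ioi
    intro x hx
    have he1 : c + (k : ℝ) + l + 1 - 1 = c + (k : ℝ) + l := by ring
    simp only [he1, neg_mul]
  rw [setIntegral_congr_fun measurableSet_Ioi (fun x hx => expand_pt a b c δ hb i hx)]
  rw [integral_finset_sum _ (fun j _ => integrable_finset_sum _
    (fun k _ => integrable_finset_sum _ (fun l _ => hterm_int _ k l)))]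
  unfold K1term
  apply Finset.sum_congr rfl
  intro j hj
  rw [integral_finset_sum _ (fun k _ => integrable_finset_sum _ (fun l _ => hterm_int _ k l))]
  apply Finset.sum_congr rfl
  intro k hk
  rw [integral_finset_sum _ (fun l _ => hterm_int _ k l)]
  apply Finset.sum_congr rfl
  intro l hl
  rw [MeasureTheory.integral_const_mul, hval k l]
  unfold cc
  rw [one_div, Real.inv_rpow hbi.le]
  have hne1 : ((1:ℝ) + b) ^ i ≠ 0 := by positivity
  have hne2 : (b * i + δ) ^ (c + (k : ℝ) + l + 1) ≠ 0 := by positivity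
  field_simp


theorem K1_integral_eq_series (a b c δ : ℝ) (ha : 0 < a) (hb : 0 < b) (hδ : 0 < δ)
    (hc : 0 ≤ c) :
    IntegrableOn (fun x : ℝ => x ^ c * Real.exp (-δ * x) * (U b x) ^ (a - 1))
      (Set.Ioi 0) ∧
    HasSum (fun i : ℕ => K1term a b c δ i)
      (∫ x in Set.Ioi 0, x ^ c * Real.exp (-δ * x) * (U b x) ^ (a - 1)) := by
  refine ⟨f_integrable a b c δ ha hb hδ hc, ?_⟩
  have H := stepB a b c δ ha hb hδ hc
  have he : (fun i : ℕ => K1term a b c δ i)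
      = fun i : ℕ => ∫ x in Set.Ioi 0, cc a i * (x ^ c * Real.exp (-δ * x) * Tf b x ^ i) :=
    funext fun i => (I_eq a b c δ hb hδ hc i).symm
  rw [he]
  exact H
end

section
/- For all α > 0, θ > 0, every natural number n, and every x > 0, the tail moment of the EXGD satisfies ∫_x^∞ t^n f(t; α, θ) dt = (α θ²/(1+θ)) [ L₁(α, θ, n, θ, x) + (θ/2) L₂(α, θ, n, θ, x) ], where L₁(a,b,c,δ,t) = Σ_{i=0}^∞ Σ_{j=0}^{i} Σ_{k=0}^{j} Σ_{l=0}^{k} C(a−1,i) C(i,j) C(j,k) C(k,l) (−1)^i b^j (b/2)^l Γ(c+k+l+1, t(bi+δ)) / [ (1+b)^i (bi+δ)^{c+k+l+1} ] and L₂(a,b,c,δ,t) = L₁(a,b,c+2,δ,t). Consequently the conditional moment E(Xⁿ | X > x) equals this quantity divided by 1 − [U(x;θ)]^α. -/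
open Real MeasureTheory Set Filter Topology

/-- The PDF of the exponentiated xgamma distribution EXGD(α, θ). -/
noncomputable def exgdPdf (α θ x : ℝ) : ℝ :=
  α * θ ^ 2 / (1 + θ) * (1 + θ * x ^ 2 / 2) * Real.exp (-θ * x) * (U θ x) ^ (α - 1)

/-- Upper incomplete gamma function `Γ(s, x) = ∫_x^∞ u^{s-1} e^{-u} du`. -/
noncomputable def uGamma (s x : ℝ) : ℝ :=
  ∫ u in Set.Ioi x, u ^ (s - 1) * Real.exp (-u)

/-- `L₁(a,b,c,δ,t)` of Lemma 2, as the sum of its series. -/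
noncomputable def L1 (a b c δ t : ℝ) : ℝ :=
  ∑' i : ℕ,
    ∑ j ∈ Finset.range (i + 1), ∑ k ∈ Finset.range (j + 1), ∑ l ∈ Finset.range (k + 1),
      genChoose (a - 1) i * (i.choose j) * (j.choose k) * (k.choose l) *
        (-1 : ℝ) ^ i * b ^ j * (b / 2) ^ l *
        uGamma (c + k + l + 1) (t * (b * i + δ)) /
        ((1 + b) ^ i * (b * i + δ) ^ (c + (k : ℝ) + l + 1))

/-- `L₂(a,b,c,δ,t) = L₁(a,b,c+2,δ,t)`. -/
noncomputable def L2 (a b c δ t : ℝ) : ℝ := L1 a b (c + 2) δ t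

lemma genChoose_zero (a : ℝ) : genChoose a 0 = 1 := by simp [genChoose]

lemma genChoose_succ (a : ℝ) (i : ℕ) :
    genChoose a (i + 1) = genChoose a i * (a - i) / (i + 1) := by
  unfold genChoose
  rw [Finset.prod_range_succ, Nat.factorial_succ]
  push_cast
  have h1 : ((Nat.factorial i : ℝ)) ≠ 0 := by exact_mod_cast (Nat.factorial_pos i).ne'
  have h2 : ((i : ℝ) + 1) ≠ 0 := by positivity
  rw [div_mul_eq_mul_div, div_div, mul_comm ((i:ℝ) + 1)]

lemma genChoose_id (a : ℝ) (i : ℕ) :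
    a * genChoose (a - 1) i = (a - i) * genChoose a i := by
  unfold genChoose
  have h1 : (∏ j ∈ Finset.range (i + 1), (a - j)) = a * ∏ j ∈ Finset.range i, (a - 1 - j) := by
    rw [Finset.prod_range_succ']
    have : ∀ j ∈ Finset.range i, (a - ((j : ℕ) + 1 : ℕ)) = a - 1 - j := by
      intro j _; push_cast; ring
    rw [Finset.prod_congr rfl this]
    push_cast; ring
  have h2 : (∏ j ∈ Finset.range (i + 1), (a - j)) =
      (∏ j ∈ Finset.range i, (a - j)) * (a - i) := Finset.prod_range_succ _ _
  have h1' := h1.symm.trans h2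
  field_simp
  linarith [h1']

lemma genChoose_eq_zero {a : ℝ} {m : ℕ} (ha : a = m) {i : ℕ} (hi : m < i) :
    genChoose a i = 0 := by
  unfold genChoose
  rw [Finset.prod_eq_zero (Finset.mem_range.mpr hi) (by rw [ha]; ring)]
  simp

lemma summable_abs_genChoose (a : ℝ) {s : ℝ} (hs : |s| < 1) :
    Summable (fun i => |genChoose a i| * |s| ^ i) := by
  by_cases hs0 : s = 0
  · apply summable_of_ne_finset_zero (s := {0})
    intro i hi
    simp only [Finset.mem_singleton] at hi
    simp [hs0, zero_pow hi]
  by_cases ha : ∃ m : ℕ, a = m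
  · obtain ⟨m, hm⟩ := ha
    apply summable_of_ne_finset_zero (s := Finset.range (m + 1))
    intro i hi
    rw [Finset.mem_range, not_lt] at hi
    rw [genChoose_eq_zero hm (by omega)]
    simp
  push_neg at ha
  have hne : ∀ i : ℕ, genChoose a i ≠ 0 := by
    intro i
    unfold genChoose
    apply div_ne_zero
    · exact Finset.prod_ne_zero_iff.mpr fun j _ => sub_ne_zero.mpr (ha j)
    · exact_mod_cast (Nat.factorial_pos i).ne'
  have hpos : ∀ i : ℕ, 0 < |genChoose a i| * |s| ^ i := by
    intro i
    exact mul_pos (abs_pos.mpr (hne i)) (pow_pos (abs_pos.mpr hs0) i)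
  apply summable_of_ratio_test_tendsto_lt_one hs
    (Eventually.of_forall fun i => (hpos i).ne')
  have key : ∀ i : ℕ, ‖|genChoose a (i+1)| * |s| ^ (i+1)‖ / ‖|genChoose a i| * |s| ^ i‖
      = |a - i| / (i + 1) * |s| := by
    intro i
    rw [Real.norm_eq_abs, Real.norm_eq_abs, abs_of_pos (hpos (i+1)), abs_of_pos (hpos i),
      genChoose_succ, pow_succ]
    rw [abs_div, abs_mul]
    have h1 : |genChoose a i| ≠ 0 := abs_ne_zero.mpr (hne i)
    have h2 : (0:ℝ) < |s| ^ i := pow_pos (abs_pos.mpr hs0) i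
    have h3 : |((i:ℝ) + 1)| = (i:ℝ) + 1 := abs_of_pos (by positivity)
    rw [h3]
    field_simp
  simp_rw [key]
  have h1 : Tendsto (fun i : ℕ => |a - i| / (i + 1)) atTop (𝓝 1) := by
    have h2 : Tendsto (fun i : ℕ => 1 - (a + 1) * (1 / ((i:ℝ) + 1))) atTop (𝓝 1) := by
      have := tendsto_one_div_add_atTop_nhds_zero_nat (𝕜 := ℝ)
      have h3 := this.const_mul (a + 1)
      have h4 := (tendsto_const_nhds (x := (1:ℝ))).sub h3
      simpa using h4
    apply h2.congr'
    filter_upwards [eventually_ge_atTop (Nat.ceil |a|)] with i hi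
    have hia : a ≤ i := le_trans (le_abs_self a) (le_trans (Nat.le_ceil _) (by exact_mod_cast hi))
    have : |a - i| = (i:ℝ) - a := by rw [abs_sub_comm]; exact abs_of_nonneg (by linarith)
    rw [this]
    have h5 : ((i:ℝ) + 1) ≠ 0 := by positivity
    field_simp; ring
  have := h1.mul (tendsto_const_nhds (x := |s|))
  simpa using this

lemma summable_genChoose (a : ℝ) {s : ℝ} (hs : |s| < 1) :
    Summable (fun i => genChoose a i * s ^ i) := by
  apply Summable.of_abs
  exact (summable_abs_genChoose a hs).congr fun i => by rw [abs_mul, abs_pow]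

lemma genChoose_succ_mul (a : ℝ) (i : ℕ) :
    ((i:ℝ) + 1) * genChoose a (i + 1) = a * genChoose (a - 1) i := by
  rw [genChoose_succ, genChoose_id]
  field_simp

lemma hasSum_genChoose (a : ℝ) {s : ℝ} (hs : |s| < 1) :
    HasSum (fun i => genChoose a i * s ^ i) ((1 + s) ^ a) := by
  have key : ∀ y : ℝ, |y| < 1 → (1 + y) * (∑' n, genChoose a n * ((n:ℝ) * y ^ (n-1)))
      = a * ∑' n, genChoose a n * y ^ n := by
    intro y hy
    have hS : Summable (fun i => genChoose a i * y ^ i) := summable_genChoose a hy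
    have hS1 : Summable (fun i => genChoose (a-1) i * y ^ i) := summable_genChoose (a-1) hy
    have hA : Summable (fun i => a * (genChoose (a-1) i * y ^ i)) := hS1.mul_left a
    have hshift : ∀ i : ℕ, genChoose a (i+1) * (((i+1 : ℕ) : ℝ) * y ^ ((i+1) - 1))
        = a * (genChoose (a-1) i * y ^ i) := by
      intro i
      have h2 := genChoose_succ_mul a i
      simp only [Nat.add_sub_cancel]
      push_cast
      linear_combination y ^ i * h2
    have hD : Summable (fun n : ℕ => genChoose a n * ((n:ℝ) * y ^ (n-1))) := by
      rw [← summable_nat_add_iff 1]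
      exact hA.congr fun i => (hshift i).symm
    have hft : (∑' n, genChoose a n * ((n:ℝ) * y ^ (n-1)))
        = ∑' i, a * (genChoose (a-1) i * y ^ i) := by
      rw [Summable.tsum_eq_zero_add hD]
      simp only [Nat.cast_zero, zero_mul, mul_zero, zero_add]
      exact tsum_congr hshift
    have hB : Summable (fun n : ℕ => (n:ℝ) * genChoose a n * y ^ n) := by
      apply ((hS.mul_left a).sub hA).congr
      intro i
      have h := genChoose_id a i
      linear_combination (- y ^ i) * h
    have hyft : y * (∑' n, genChoose a n * ((n:ℝ) * y ^ (n-1)))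
        = ∑' n : ℕ, (n:ℝ) * genChoose a n * y ^ n := by
      rw [← tsum_mul_left]
      apply tsum_congr
      intro n
      cases n with
      | zero => simp
      | succ m =>
        simp only [Nat.add_sub_cancel]
        push_cast
        ring
    have hAs : Summable (fun i => a * (genChoose (a-1) i * y ^ i)) := hA
    calc (1 + y) * (∑' n, genChoose a n * ((n:ℝ) * y ^ (n-1)))
        = (∑' n, genChoose a n * ((n:ℝ) * y ^ (n-1)))
          + y * (∑' n, genChoose a n * ((n:ℝ) * y ^ (n-1))) := by ring
      _ = (∑' i, a * (genChoose (a-1) i * y ^ i)) + ∑' n : ℕ, (n:ℝ) * genChoose a n * y ^ n := by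
          rw [hyft, hft]
      _ = ∑' n, (a * (genChoose (a-1) n * y ^ n) + (n:ℝ) * genChoose a n * y ^ n) :=
          (Summable.tsum_add hAs hB).symm
      _ = ∑' n, a * (genChoose a n * y ^ n) := by
          apply tsum_congr
          intro n
          have h := genChoose_id a n
          linear_combination y ^ n * h
      _ = a * ∑' n, genChoose a n * y ^ n := by rw [tsum_mul_left]
  set r : ℝ := (1 + |s|) / 2 with hrdef
  have habs : 0 ≤ |s| := abs_nonneg s
  have hr0 : 0 < r := by positivity
  have hsr : |s| < r := by rw [hrdef]; linarith
  have hr1 : r < 1 := by rw [hrdef]; linarith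
  set t : Set ℝ := Ioo (-r) r with htdef
  have hmem : ∀ y ∈ t, |y| < r := fun y hy => abs_lt.mpr ⟨hy.1, hy.2⟩
  have hy1 : ∀ y ∈ t, 0 < 1 + y := by
    intro y hy
    have h := hy.1
    nlinarith [hy.1]
  set u : ℕ → ℝ := fun n => |genChoose a n| * n * r ^ (n - 1) with hudef
  have hu : Summable u := by
    rw [← summable_nat_add_iff 1]
    apply (((summable_abs_genChoose (a-1) (by rwa [abs_of_pos hr0])).mul_left |a|)).congr
    intro i
    have h2 := genChoose_succ_mul a i
    have h3 : |((i:ℝ) + 1) * genChoose a (i+1)| = |a * genChoose (a-1) i| := by rw [h2]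
    rw [abs_mul, abs_mul, abs_of_pos (show (0:ℝ) < (i:ℝ)+1 by positivity)] at h3
    simp only [hudef, Nat.add_sub_cancel, abs_of_pos hr0]
    push_cast
    linear_combination (-(r ^ i)) * h3
  have hderiv : ∀ y ∈ t, HasDerivAt (fun z => ∑' n, genChoose a n * z ^ n)
      (∑' n, genChoose a n * ((n:ℝ) * y ^ (n - 1))) y := by
    intro y hy
    apply hasDerivAt_tsum_of_isPreconnected hu isOpen_Ioo (convex_Ioo _ _).isPreconnected
      (g := fun n z => genChoose a n * z ^ n)
      (g' := fun n y => genChoose a n * ((n:ℝ) * y ^ (n - 1)))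
      (fun n z _ => (hasDerivAt_pow n z).const_mul _) ?_ (y₀ := 0)
      (by constructor <;> simp [hr0, neg_neg, neg_lt_zero] <;> linarith) ?_ hy
    · intro n z hz
      rw [Real.norm_eq_abs, abs_mul, abs_mul, abs_pow]
      simp only [hudef]
      rw [Nat.abs_cast]
      have h1 : |z| ^ (n-1) ≤ r ^ (n-1) := pow_le_pow_left₀ (abs_nonneg z) (hmem z hz).le _
      have h2 : (0:ℝ) ≤ |genChoose a n| * n := by positivity
      calc |genChoose a n| * ((n:ℝ) * |z| ^ (n-1)) = |genChoose a n| * n * |z| ^ (n-1) := by ring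
        _ ≤ |genChoose a n| * n * r ^ (n-1) := by
            apply mul_le_mul_of_nonneg_left h1 h2
    · exact summable_genChoose a (by simp)
  set f : ℝ → ℝ := fun z => ∑' n, genChoose a n * z ^ n with hfdef
  have hg0 : ∀ y ∈ t, HasDerivAt (fun z => f z * (1 + z) ^ (-a)) 0 y := by
    intro y hy
    have h1y := hy1 y hy
    have hd1 := hderiv y hy
    have hd2 := HasDerivAt.rpow_const (p := -a) ((hasDerivAt_id y).const_add 1) (Or.inl h1y.ne')
    simp only [id_eq] at hd2
    have hmul := hd1.mul hd2
    refine hmul.congr_deriv (Eq.symm ?_)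
    have hrw : (1 + y) ^ (-a) = (1 + y) ^ (-a - 1) * (1 + y) := by
      rw [← Real.rpow_add_one h1y.ne' (-a - 1)]
      ring_nf
    rw [hrw]
    have hk := key y (lt_trans (hmem y hy) hr1)
    simp only [hfdef]
    linear_combination (- ((1 + y) ^ (-a - 1))) * hk
  have hIcc : ∀ y ∈ Icc (-|s|) |s|, y ∈ t := by
    intro y hy
    exact ⟨lt_of_lt_of_le (neg_lt_neg hsr) hy.1, lt_of_le_of_lt hy.2 hsr⟩
  have hcont : ContinuousOn (fun z => f z * (1 + z) ^ (-a)) (Icc (-|s|) |s|) :=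
    fun y hy => ((hg0 y (hIcc y hy)).continuousAt.continuousWithinAt)
  have hconst := constant_of_has_deriv_right_zero hcont
    (fun y hy => ((hg0 y (hIcc y (Ico_subset_Icc_self hy))).hasDerivWithinAt))
  have h01 : (0:ℝ) ∈ Icc (-|s|) |s| := ⟨neg_nonpos.mpr habs, habs⟩
  have hs1 : s ∈ Icc (-|s|) |s| := ⟨neg_abs_le s, le_abs_self s⟩
  have heq : f s * (1 + s) ^ (-a) = f 0 * (1 + 0) ^ (-a) :=
    (hconst s hs1).trans (hconst 0 h01).symm
  have hf0 : f 0 = 1 := by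
    simp only [hfdef]
    rw [tsum_eq_single 0 (fun n hn => by simp [zero_pow hn])]
    simp [genChoose_zero]
  rw [hf0, one_mul] at heq
  rw [show (1:ℝ) + 0 = 1 by norm_num, Real.one_rpow] at heq
  have h1s : 0 < 1 + s := by have := abs_lt.mp hs; linarith
  have hfs : f s = (1 + s) ^ a := by
    have h3 : (1+s) ^ a ≠ 0 := (Real.rpow_pos_of_pos h1s a).ne'
    rw [Real.rpow_neg h1s.le a] at heq
    field_simp at heq
    exact heq
  exact ((summable_genChoose a hs).hasSum_iff).mpr hfs
lemma integrableOn_pow_exp_Ioi (m : ℕ) {y : ℝ} (hy : 0 ≤ y) :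
    IntegrableOn (fun u => u ^ m * Real.exp (-u)) (Ioi y) := by
  have h := Real.GammaIntegral_convergent (s := (m:ℝ) + 1) (by positivity)
  have h2 := h.mono_set (Ioi_subset_Ioi hy)
  apply h2.congr_fun ?_ measurableSet_Ioi
  intro u _
  simp only [add_sub_cancel_right, Real.rpow_natCast]
  ring

lemma integrableOn_pow_exp_mul (m : ℕ) {l x : ℝ} (hl : 0 < l) (hx : 0 ≤ x) :
    IntegrableOn (fun t => t ^ m * Real.exp (-(l * t))) (Ioi x) := by
  have h1 : IntegrableOn (fun t => (l * t) ^ m * Real.exp (-(l * t))) (Ioi x) := by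
    have h := (integrableOn_Ioi_comp_mul_left_iff
      (fun u => u ^ m * Real.exp (-u)) x hl).mpr (integrableOn_pow_exp_Ioi m (by positivity))
    exact h
  have h2 : IntegrableOn (fun t => ((l:ℝ) ^ m)⁻¹ * ((l * t) ^ m * Real.exp (-(l * t)))) (Ioi x) :=
    h1.const_mul _
  apply h2.congr_fun ?_ measurableSet_Ioi
  intro t _
  simp only [mul_pow]
  have : (l:ℝ) ^ m ≠ 0 := by positivity
  field_simp

lemma integral_pow_exp_Ioi (m : ℕ) {l : ℝ} (x : ℝ) (hl : 0 < l) :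
    ∫ t in Ioi x, t ^ m * Real.exp (-(l * t))
      = uGamma ((m : ℝ) + 1) (l * x) / l ^ (m + 1) := by
  have h := integral_comp_mul_left_Ioi (fun u => u ^ m * Real.exp (-u)) x hl
  have hg : uGamma ((m : ℝ) + 1) (l * x) = ∫ u in Ioi (l * x), u ^ m * Real.exp (-u) := by
    unfold uGamma
    congr 1
    funext u
    rw [add_sub_cancel_right, Real.rpow_natCast]
  have h2 : (∫ t in Ioi x, (l * t) ^ m * Real.exp (-(l * t)))
      = l ^ m * ∫ t in Ioi x, t ^ m * Real.exp (-(l * t)) := by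
    rw [← integral_const_mul]
    congr 1
    funext t
    rw [mul_pow]
    ring
  rw [h2, smul_eq_mul] at h
  rw [hg]
  have hlm : (l : ℝ) ^ m ≠ 0 := by positivity
  have hl0 : l ≠ 0 := hl.ne'
  field_simp at h ⊢
  linear_combination h

lemma expand3 (θ t : ℝ) (k : ℕ) :
    (1 + θ * t / 2) ^ k
      = ∑ l ∈ Finset.range (k + 1), (k.choose l : ℝ) * (θ / 2) ^ l * t ^ l := by
  rw [show (1:ℝ) + θ * t / 2 = (θ / 2 * t) + 1 by ring, add_pow]
  apply Finset.sum_congr rfl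
  intro l _
  rw [one_pow, mul_pow]
  ring

lemma expand2 (θ t : ℝ) (j : ℕ) :
    (1 + t + θ * t ^ 2 / 2) ^ j
      = ∑ k ∈ Finset.range (j + 1), ∑ l ∈ Finset.range (k + 1),
          (j.choose k : ℝ) * (k.choose l) * (θ / 2) ^ l * t ^ (k + l) := by
  rw [show (1:ℝ) + t + θ * t ^ 2 / 2 = (t * (1 + θ * t / 2)) + 1 by ring, add_pow]
  apply Finset.sum_congr rfl
  intro k _
  rw [one_pow, mul_one, mul_pow, expand3, Finset.mul_sum, Finset.sum_mul]
  apply Finset.sum_congr rfl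
  intro l _
  rw [pow_add]
  ring

lemma expand1 (θ t : ℝ) (i : ℕ) :
    (1 + θ + θ * t + θ ^ 2 * t ^ 2 / 2) ^ i
      = ∑ j ∈ Finset.range (i + 1), ∑ k ∈ Finset.range (j + 1), ∑ l ∈ Finset.range (k + 1),
          (i.choose j : ℝ) * (j.choose k) * (k.choose l) * θ ^ j * (θ / 2) ^ l * t ^ (k + l) := by
  rw [show (1:ℝ) + θ + θ * t + θ ^ 2 * t ^ 2 / 2 = (θ * (1 + t + θ * t ^ 2 / 2)) + 1 by ring,
    add_pow]
  apply Finset.sum_congr rfl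
  intro j _
  rw [one_pow, mul_one, mul_pow, expand2, Finset.mul_sum, Finset.sum_mul]
  apply Finset.sum_congr rfl
  intro k _
  rw [Finset.mul_sum, Finset.sum_mul]
  apply Finset.sum_congr rfl
  intro l _
  ring

lemma S_lt_one {θ t : ℝ} (hθ : 0 < θ) (ht : 0 < t) :
    (1 + θ + θ * t + θ ^ 2 * t ^ 2 / 2) * Real.exp (-θ * t) / (1 + θ) < 1 := by
  have h1θ : (0:ℝ) < 1 + θ := by linarith
  rw [div_lt_one h1θ]
  have hexp : 1 + θ * t + (θ * t) ^ 2 / 2 + (θ * t) ^ 3 / 6 ≤ Real.exp (θ * t) := by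
    have h := Real.sum_le_exp_of_nonneg (x := θ * t) (by positivity) 4
    have : ∑ i ∈ Finset.range 4, (θ * t) ^ i / (i.factorial : ℝ)
        = 1 + θ * t + (θ * t) ^ 2 / 2 + (θ * t) ^ 3 / 6 := by
      simp [Finset.sum_range_succ, Nat.factorial]
    linarith [this ▸ h]
  have key : 1 + θ + θ * t + θ ^ 2 * t ^ 2 / 2 < (1 + θ) * Real.exp (θ * t) := by
    have h2 : (1 + θ) * (1 + θ * t + (θ * t) ^ 2 / 2 + (θ * t) ^ 3 / 6)
        ≤ (1 + θ) * Real.exp (θ * t) := by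
      apply mul_le_mul_of_nonneg_left hexp (by linarith)
    nlinarith [mul_pos hθ ht, pow_pos (mul_pos hθ ht) 2, pow_pos (mul_pos hθ ht) 3]
  have hepos := Real.exp_pos (-θ * t)
  have hrw : Real.exp (θ * t) * Real.exp (-θ * t) = 1 := by
    rw [← Real.exp_add]; norm_num
  calc (1 + θ + θ * t + θ ^ 2 * t ^ 2 / 2) * Real.exp (-θ * t)
      < ((1 + θ) * Real.exp (θ * t)) * Real.exp (-θ * t) := by
        apply mul_lt_mul_of_pos_right key hepos
    _ = 1 + θ := by rw [mul_assoc, hrw, mul_one]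

lemma S_anti {θ : ℝ} (hθ : 0 < θ) :
    Antitone (fun t => (1 + θ + θ * t + θ ^ 2 * t ^ 2 / 2) * Real.exp (-θ * t) / (1 + θ)) := by
  have h1θ : (0:ℝ) < 1 + θ := by linarith
  have hder : ∀ t : ℝ, HasDerivAt
      (fun t => (1 + θ + θ * t + θ ^ 2 * t ^ 2 / 2) * Real.exp (-θ * t) / (1 + θ))
      (((θ + θ ^ 2 * t) * Real.exp (-θ * t)
        + (1 + θ + θ * t + θ ^ 2 * t ^ 2 / 2) * (-θ * Real.exp (-θ * t))) / (1 + θ)) t := by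
    intro t
    have hP : HasDerivAt (fun t : ℝ => 1 + θ + θ * t + θ ^ 2 * t ^ 2 / 2)
        (θ + θ ^ 2 * t) t := by
      have h1 : HasDerivAt (fun t : ℝ => θ * t) θ t := by
        simpa using (hasDerivAt_id t).const_mul θ
      have h2 : HasDerivAt (fun t : ℝ => θ ^ 2 * t ^ 2 / 2) (θ ^ 2 * t) t := by
        have := ((hasDerivAt_pow 2 t).const_mul (θ ^ 2)).div_const 2
        refine this.congr_deriv ?_
        ring_nf
      exact (h1.const_add (1 + θ)).add h2
    have hE : HasDerivAt (fun t : ℝ => Real.exp (-θ * t)) (-θ * Real.exp (-θ * t)) t := by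
      have h3 : HasDerivAt (fun t : ℝ => -θ * t) (-θ) t := by
        simpa using (hasDerivAt_id t).const_mul (-θ)
      have := (Real.hasDerivAt_exp (-θ * t)).comp t h3
      simpa [Function.comp_def, mul_comm] using this
    exact (hP.mul hE).div_const (1 + θ)
  apply antitone_of_deriv_nonpos
  · intro t
    exact (hder t).differentiableAt
  · intro t
    rw [(hder t).deriv]
    apply div_nonpos_of_nonpos_of_nonneg _ h1θ.le
    have he := Real.exp_pos (-θ * t)
    nlinarith [sq_nonneg t, sq_nonneg (θ * t), he.le, mul_pos (mul_pos hθ hθ) he]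

lemma integral_triple_sum {x : ℝ} (i : ℕ) (g : ℕ → ℕ → ℕ → ℝ → ℝ)
    (hg : ∀ j k l : ℕ, IntegrableOn (g j k l) (Ioi x)) :
    ∫ t in Ioi x, (∑ j ∈ Finset.range (i+1), ∑ k ∈ Finset.range (j+1),
        ∑ l ∈ Finset.range (k+1), g j k l t)
      = ∑ j ∈ Finset.range (i+1), ∑ k ∈ Finset.range (j+1), ∑ l ∈ Finset.range (k+1),
          ∫ t in Ioi x, g j k l t := by
  rw [integral_finset_sum _ (fun j _ => integrable_finset_sum _
    (fun k _ => integrable_finset_sum _ (fun l _ => hg j k l)))]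
  refine Finset.sum_congr rfl fun j _ => ?_
  rw [integral_finset_sum _ (fun k _ => integrable_finset_sum _ (fun l _ => hg j k l))]
  refine Finset.sum_congr rfl fun k _ => ?_
  exact integral_finset_sum _ (fun l _ => hg j k l)

theorem exgd_conditional_moment (α θ : ℝ) (hα : 0 < α) (hθ : 0 < θ) (n : ℕ)
    (x : ℝ) (hx : 0 < x) :
    (∫ t in Set.Ioi x, t ^ n * exgdPdf α θ t) =
      α * θ ^ 2 / (1 + θ) * (L1 α θ n θ x + θ / 2 * L2 α θ n θ x) ∧
    (∫ t in Set.Ioi x, t ^ n * exgdPdf α θ t) / (1 - (U θ x) ^ α) =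
      α * θ ^ 2 / (1 + θ) * (L1 α θ n θ x + θ / 2 * L2 α θ n θ x) /
        (1 - (U θ x) ^ α) := by
  have h1θ : (0:ℝ) < 1 + θ := by linarith
  set S : ℝ → ℝ := fun t => (1 + θ + θ * t + θ ^ 2 * t ^ 2 / 2) * Real.exp (-(θ * t)) / (1 + θ)
    with hSdef
  have hSpos : ∀ t : ℝ, 0 < t → 0 < S t := by
    intro t ht
    simp only [hSdef]
    have := Real.exp_pos (-(θ * t))
    positivity
  have hSlt : ∀ t : ℝ, 0 < t → S t < 1 := by
    intro t ht
    have := S_lt_one hθ ht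
    simp only [neg_mul] at this
    exact this
  have hSanti : Antitone S := by
    have := S_anti hθ
    simp only [neg_mul] at this
    exact this
  set q : ℝ := S x with hqdef
  have hq0 : 0 < q := hSpos x hx
  have hq1 : q < 1 := hSlt x hx
  have hqa : |q| < 1 := by rw [abs_of_pos hq0]; exact hq1
  set H : ℕ → ℕ → ℝ → ℝ := fun m i t => t ^ m * Real.exp (-(θ * t)) * S t ^ i with hHdef
  set c : ℕ → ℝ := fun i => genChoose (α - 1) i * (-1) ^ i with hcdef
  -- basic integrability of the dominating functions
  have hMint : ∀ m : ℕ, IntegrableOn (fun t => t ^ m * Real.exp (-(θ * t))) (Ioi x) :=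
    fun m => integrableOn_pow_exp_mul m hθ hx.le
  -- finite-sum representation of H
  have hHrep : ∀ (m i : ℕ) (t : ℝ), H m i t
      = ∑ j ∈ Finset.range (i+1), ∑ k ∈ Finset.range (j+1), ∑ l ∈ Finset.range (k+1),
          ((i.choose j : ℝ) * (j.choose k) * (k.choose l) * θ ^ j * (θ / 2) ^ l / (1 + θ) ^ i)
            * (t ^ (m + (k + l)) * Real.exp (-(θ * ((i:ℝ) + 1) * t))) := by
    intro m i t
    have he : Real.exp (-(θ * t)) * Real.exp (-(θ * t)) ^ i
        = Real.exp (-(θ * ((i:ℝ) + 1) * t)) := by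
      rw [← Real.exp_nat_mul, ← Real.exp_add]
      congr 1
      push_cast
      ring
    have hSpow : S t ^ i = (1 + θ + θ * t + θ ^ 2 * t ^ 2 / 2) ^ i
        * Real.exp (-(θ * t)) ^ i / (1 + θ) ^ i := by
      simp only [hSdef]
      rw [div_pow, mul_pow]
    simp only [hHdef]
    rw [hSpow, expand1]
    simp only [Finset.sum_mul, Finset.mul_sum, Finset.sum_div]
    refine Finset.sum_congr rfl fun j _ => Finset.sum_congr rfl fun k _ =>
      Finset.sum_congr rfl fun l _ => ?_
    rw [← he]
    ring
  -- integrability of H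
  have hHint : ∀ m i : ℕ, IntegrableOn (H m i) (Ioi x) := by
    intro m i
    have : IntegrableOn (fun t =>
        ∑ j ∈ Finset.range (i+1), ∑ k ∈ Finset.range (j+1), ∑ l ∈ Finset.range (k+1),
          ((i.choose j : ℝ) * (j.choose k) * (k.choose l) * θ ^ j * (θ / 2) ^ l / (1 + θ) ^ i)
            * (t ^ (m + (k + l)) * Real.exp (-(θ * ((i:ℝ) + 1) * t)))) (Ioi x) := by
      apply integrable_finset_sum
      intro j _
      apply integrable_finset_sum
      intro k _
      apply integrable_finset_sum
      intro l _
      have hpos : (0:ℝ) < θ * ((i:ℝ) + 1) := by positivity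
      exact (integrableOn_pow_exp_mul (m + (k + l)) hpos hx.le).const_mul
        ((i.choose j : ℝ) * (j.choose k) * (k.choose l) * θ ^ j * (θ / 2) ^ l / (1 + θ) ^ i)
    apply this.congr_fun ?_ measurableSet_Ioi
    intro t _
    exact (hHrep m i t).symm
  -- value of ∫ H
  have hHval : ∀ m i : ℕ, ∫ t in Ioi x, H m i t
      = ∑ j ∈ Finset.range (i+1), ∑ k ∈ Finset.range (j+1), ∑ l ∈ Finset.range (k+1),
          ((i.choose j : ℝ) * (j.choose k) * (k.choose l) * θ ^ j * (θ / 2) ^ l / (1 + θ) ^ i)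
            * (uGamma ((m + (k + l) : ℕ) + 1) (θ * ((i:ℝ) + 1) * x)
                / (θ * ((i:ℝ) + 1)) ^ (m + (k + l) + 1)) := by
    intro m i
    have hpos : (0:ℝ) < θ * ((i:ℝ) + 1) := by positivity
    rw [setIntegral_congr_fun measurableSet_Ioi (g := fun t =>
        ∑ j ∈ Finset.range (i+1), ∑ k ∈ Finset.range (j+1), ∑ l ∈ Finset.range (k+1),
          ((i.choose j : ℝ) * (j.choose k) * (k.choose l) * θ ^ j * (θ / 2) ^ l / (1 + θ) ^ i)
            * (t ^ (m + (k + l)) * Real.exp (-(θ * ((i:ℝ) + 1) * t))))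
        (fun t _ => hHrep m i t)]
    rw [integral_triple_sum i _ (fun j k l =>
      (integrableOn_pow_exp_mul (m + (k + l)) hpos hx.le).const_mul
        ((i.choose j : ℝ) * (j.choose k) * (k.choose l) * θ ^ j * (θ / 2) ^ l / (1 + θ) ^ i))]
    refine Finset.sum_congr rfl fun j _ => Finset.sum_congr rfl fun k _ =>
      Finset.sum_congr rfl fun l _ => ?_
    rw [integral_const_mul, integral_pow_exp_Ioi _ _ hpos]
  -- nonnegativity and bounds for H
  have hHnn : ∀ (m i : ℕ) (t : ℝ), t ∈ Ioi x → 0 ≤ H m i t := by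
    intro m i t ht
    have ht0 : 0 < t := lt_trans hx ht
    have h2 := (hSpos t ht0).le
    simp only [hHdef]
    positivity
  have hHle : ∀ (m i : ℕ) (t : ℝ), t ∈ Ioi x →
      H m i t ≤ q ^ i * (t ^ m * Real.exp (-(θ * t))) := by
    intro m i t ht
    have ht0 : 0 < t := lt_trans hx ht
    have h2 : S t ^ i ≤ q ^ i := pow_le_pow_left₀ (hSpos t ht0).le (hSanti (le_of_lt ht)) i
    have h3 : 0 ≤ t ^ m * Real.exp (-(θ * t)) := by positivity
    simp only [hHdef]
    calc t ^ m * Real.exp (-(θ * t)) * S t ^ i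
        ≤ t ^ m * Real.exp (-(θ * t)) * q ^ i := mul_le_mul_of_nonneg_left h2 h3
      _ = q ^ i * (t ^ m * Real.exp (-(θ * t))) := by ring
  set M1 : ℝ := ∫ t in Ioi x, t ^ n * Real.exp (-(θ * t)) with hM1def
  set M2 : ℝ := ∫ t in Ioi x, t ^ (n+2) * Real.exp (-(θ * t)) with hM2def
  have hHInn : ∀ (m i : ℕ), 0 ≤ ∫ t in Ioi x, H m i t := fun m i =>
    setIntegral_nonneg measurableSet_Ioi (fun t ht => hHnn m i t ht)
  have hHIle : ∀ (m i : ℕ), ∫ t in Ioi x, H m i t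
      ≤ q ^ i * ∫ t in Ioi x, t ^ m * Real.exp (-(θ * t)) := by
    intro m i
    rw [← integral_const_mul]
    exact setIntegral_mono_on (hHint m i) ((hMint m).const_mul _) measurableSet_Ioi
      (fun t ht => hHle m i t ht)
  have hci : ∀ i : ℕ, |c i| = |genChoose (α - 1) i| := by
    intro i
    simp only [hcdef]
    rw [abs_mul, abs_pow, abs_neg, abs_one, one_pow, mul_one]
  set B1 : ℕ → ℝ := fun i => |c i| * q ^ i * M1 with hB1def
  set B2 : ℕ → ℝ := fun i => (θ/2) * |c i| * q ^ i * M2 with hB2def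
  have hB1sum : Summable B1 := by
    apply ((summable_abs_genChoose (α - 1) hqa).mul_right M1).congr
    intro i
    simp only [hB1def]
    rw [hci i, abs_of_pos hq0]
  have hB2sum : Summable B2 := by
    apply (((summable_abs_genChoose (α - 1) hqa).mul_right M2).mul_left (θ/2)).congr
    intro i
    simp only [hB2def]
    rw [hci i, abs_of_pos hq0]
    ring
  -- the series of functions
  set F : ℕ → ℝ → ℝ := fun i t => c i * H n i t + (θ / 2) * (c i * H (n+2) i t) with hFdef
  have hFint : ∀ i, IntegrableOn (F i) (Ioi x) := fun i =>
    ((hHint n i).const_mul (c i)).add (((hHint (n+2) i).const_mul (c i)).const_mul (θ/2))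
  have hFnormle : ∀ i, ∫ t in Ioi x, ‖F i t‖ ≤ B1 i + B2 i := by
    intro i
    have hint2 : IntegrableOn (fun t => |c i| * (q ^ i * (t^n * Real.exp (-(θ*t))))
        + ((θ/2) * |c i|) * (q ^ i * (t^(n+2) * Real.exp (-(θ*t))))) (Ioi x) :=
      (((hMint n).const_mul _).const_mul _).add (((hMint (n+2)).const_mul _).const_mul _)
    have hle : ∀ t ∈ Ioi x, ‖F i t‖ ≤ |c i| * (q ^ i * (t^n * Real.exp (-(θ*t))))
        + ((θ/2) * |c i|) * (q ^ i * (t^(n+2) * Real.exp (-(θ*t)))) := by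
      intro t ht
      simp only [hFdef]
      calc ‖c i * H n i t + (θ/2) * (c i * H (n+2) i t)‖
          ≤ ‖c i * H n i t‖ + ‖(θ/2) * (c i * H (n+2) i t)‖ := norm_add_le _ _
        _ = |c i| * H n i t + ((θ/2) * |c i|) * H (n+2) i t := by
            have h1 : ‖c i * H n i t‖ = |c i| * H n i t := by
              rw [Real.norm_eq_abs, abs_mul, abs_of_nonneg (hHnn n i t ht)]
            have h2 : ‖(θ/2) * (c i * H (n+2) i t)‖ = ((θ/2) * |c i|) * H (n+2) i t := by
              rw [Real.norm_eq_abs, abs_mul, abs_mul, abs_of_nonneg (hHnn (n+2) i t ht),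
                abs_of_pos (show (0:ℝ) < θ/2 by positivity)]
              ring
            rw [h1, h2]
        _ ≤ |c i| * (q ^ i * (t^n * Real.exp (-(θ*t))))
            + ((θ/2) * |c i|) * (q ^ i * (t^(n+2) * Real.exp (-(θ*t)))) := by
            apply add_le_add
            · exact mul_le_mul_of_nonneg_left (hHle n i t ht) (abs_nonneg _)
            · exact mul_le_mul_of_nonneg_left (hHle (n+2) i t ht) (by positivity)
    calc ∫ t in Ioi x, ‖F i t‖
        ≤ ∫ t in Ioi x, (|c i| * (q ^ i * (t^n * Real.exp (-(θ*t))))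
            + ((θ/2) * |c i|) * (q ^ i * (t^(n+2) * Real.exp (-(θ*t))))) :=
          setIntegral_mono_on (hFint i).norm hint2 measurableSet_Ioi hle
      _ = B1 i + B2 i := by
          rw [integral_add (((hMint n).const_mul _).const_mul _)
            (((hMint (n+2)).const_mul _).const_mul _),
            integral_const_mul, integral_const_mul, integral_const_mul, integral_const_mul]
          simp only [hB1def, hB2def, ← hM1def, ← hM2def]
          ring
  have hFnormsum : Summable (fun i => ∫ t in Ioi x, ‖F i t‖) :=
    Summable.of_nonneg_of_le
      (fun i => setIntegral_nonneg measurableSet_Ioi (fun t _ => norm_nonneg _))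
      hFnormle (hB1sum.add hB2sum)
  have hswap : (∑' i, ∫ t in Ioi x, F i t) = ∫ t in Ioi x, ∑' i, F i t :=
    MeasureTheory.integral_tsum_of_summable_integral_norm hFint hFnormsum
  -- values of the per-index integrals, matched to the L1 / L2 summands
  have hval1 : ∀ i : ℕ, c i * ∫ t in Ioi x, H n i t
      = ∑ j ∈ Finset.range (i+1), ∑ k ∈ Finset.range (j+1), ∑ l ∈ Finset.range (k+1),
          genChoose (α - 1) i * (i.choose j) * (j.choose k) * (k.choose l) *
            (-1 : ℝ) ^ i * θ ^ j * (θ / 2) ^ l *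
            uGamma ((n:ℝ) + k + l + 1) (x * (θ * i + θ)) /
            ((1 + θ) ^ i * (θ * i + θ) ^ ((n:ℝ) + (k : ℝ) + l + 1)) := by
    intro i
    rw [hHval n i, Finset.mul_sum]
    refine Finset.sum_congr rfl fun j _ => ?_
    rw [Finset.mul_sum]
    refine Finset.sum_congr rfl fun k _ => ?_
    rw [Finset.mul_sum]
    refine Finset.sum_congr rfl fun l _ => ?_
    have h1 : ((n + (k + l) : ℕ) : ℝ) + 1 = (n:ℝ) + k + l + 1 := by push_cast; ring
    have h2 : θ * ((i:ℝ) + 1) * x = x * (θ * i + θ) := by ring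
    have h3 : (θ * (i:ℝ) + θ) ^ ((n:ℝ) + (k:ℝ) + (l:ℝ) + 1)
        = (θ * ((i:ℝ) + 1)) ^ (n + (k + l) + 1 : ℕ) := by
      rw [show (n:ℝ) + (k:ℝ) + (l:ℝ) + 1 = ((n + (k + l) + 1 : ℕ) : ℝ) by push_cast; ring,
        Real.rpow_natCast, show θ * (i:ℝ) + θ = θ * ((i:ℝ) + 1) by ring]
    rw [h1, h2, h3]
    simp only [hcdef]
    have hne1 : ((1:ℝ) + θ) ≠ 0 := h1θ.ne'
    have hne2 : θ * ((i:ℝ) + 1) ≠ 0 := by positivity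
    field_simp
  have hval2 : ∀ i : ℕ, c i * ∫ t in Ioi x, H (n+2) i t
      = ∑ j ∈ Finset.range (i+1), ∑ k ∈ Finset.range (j+1), ∑ l ∈ Finset.range (k+1),
          genChoose (α - 1) i * (i.choose j) * (j.choose k) * (k.choose l) *
            (-1 : ℝ) ^ i * θ ^ j * (θ / 2) ^ l *
            uGamma ((n:ℝ) + 2 + k + l + 1) (x * (θ * i + θ)) /
            ((1 + θ) ^ i * (θ * i + θ) ^ ((n:ℝ) + 2 + (k : ℝ) + l + 1)) := by
    intro i
    rw [hHval (n+2) i, Finset.mul_sum]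
    refine Finset.sum_congr rfl fun j _ => ?_
    rw [Finset.mul_sum]
    refine Finset.sum_congr rfl fun k _ => ?_
    rw [Finset.mul_sum]
    refine Finset.sum_congr rfl fun l _ => ?_
    have h1 : (((n+2) + (k + l) : ℕ) : ℝ) + 1 = (n:ℝ) + 2 + k + l + 1 := by push_cast; ring
    have h2 : θ * ((i:ℝ) + 1) * x = x * (θ * i + θ) := by ring
    have h3 : (θ * (i:ℝ) + θ) ^ ((n:ℝ) + 2 + (k:ℝ) + (l:ℝ) + 1)
        = (θ * ((i:ℝ) + 1)) ^ ((n+2) + (k + l) + 1 : ℕ) := by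
      rw [show (n:ℝ) + 2 + (k:ℝ) + (l:ℝ) + 1 = (((n+2) + (k + l) + 1 : ℕ) : ℝ) by push_cast; ring,
        Real.rpow_natCast, show θ * (i:ℝ) + θ = θ * ((i:ℝ) + 1) by ring]
    rw [h1, h2, h3]
    simp only [hcdef]
    have hne1 : ((1:ℝ) + θ) ≠ 0 := h1θ.ne'
    have hne2 : θ * ((i:ℝ) + 1) ≠ 0 := by positivity
    field_simp
  -- pointwise series expansion of the integrand
  have hpt : ∀ t ∈ Ioi x, t ^ n * exgdPdf α θ t
      = α * θ ^ 2 / (1 + θ) * ∑' i : ℕ, F i t := by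
    intro t ht
    have ht0 : 0 < t := lt_trans hx ht
    have hS0 := hSpos t ht0
    have hS1 := hSlt t ht0
    have habs : |(-S t)| < 1 := by rw [abs_neg, abs_of_pos hS0]; exact hS1
    have hpow : (U θ t) ^ (α - 1) = ∑' i : ℕ, genChoose (α - 1) i * (-S t) ^ i := by
      rw [(hasSum_genChoose (α - 1) habs).tsum_eq]
      congr 1
      simp only [U, hSdef]
      ring
    calc t ^ n * exgdPdf α θ t
        = (t ^ n * (1 + θ * t ^ 2 / 2) * Real.exp (-(θ * t))) * ((U θ t) ^ (α - 1))
            * (α * θ ^ 2 / (1 + θ)) := by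
          simp only [exgdPdf, neg_mul]
          ring
      _ = (t ^ n * (1 + θ * t ^ 2 / 2) * Real.exp (-(θ * t)))
            * (∑' i : ℕ, genChoose (α - 1) i * (-S t) ^ i) * (α * θ ^ 2 / (1 + θ)) := by
          rw [hpow]
      _ = ∑' i : ℕ, (t ^ n * (1 + θ * t ^ 2 / 2) * Real.exp (-(θ * t)))
            * (genChoose (α - 1) i * (-S t) ^ i) * (α * θ ^ 2 / (1 + θ)) := by
          rw [← tsum_mul_left, ← tsum_mul_right]
      _ = ∑' i : ℕ, α * θ ^ 2 / (1 + θ) * F i t := by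
          apply tsum_congr
          intro i
          rw [neg_pow]
          simp only [hFdef, hHdef, hcdef]
          ring
      _ = α * θ ^ 2 / (1 + θ) * ∑' i : ℕ, F i t := tsum_mul_left
  -- summability of the two value series
  have hSum1 : Summable (fun i => c i * ∫ t in Ioi x, H n i t) := by
    apply Summable.of_norm_bounded hB1sum
    intro i
    rw [Real.norm_eq_abs, abs_mul, abs_of_nonneg (hHInn n i)]
    simp only [hB1def]
    calc |c i| * ∫ t in Ioi x, H n i t ≤ |c i| * (q ^ i * M1) :=
        mul_le_mul_of_nonneg_left (hHIle n i) (abs_nonneg _)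
      _ = |c i| * q ^ i * M1 := by ring
  have hSum2 : Summable (fun i => (θ/2) * (c i * ∫ t in Ioi x, H (n+2) i t)) := by
    apply Summable.of_norm_bounded hB2sum
    intro i
    rw [Real.norm_eq_abs, abs_mul, abs_mul, abs_of_nonneg (hHInn (n+2) i),
      abs_of_pos (show (0:ℝ) < θ/2 by positivity)]
    simp only [hB2def]
    calc (θ/2) * (|c i| * ∫ t in Ioi x, H (n+2) i t)
        ≤ (θ/2) * (|c i| * (q ^ i * M2)) := by
          apply mul_le_mul_of_nonneg_left _ (show (0:ℝ) ≤ θ/2 by positivity)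
          exact mul_le_mul_of_nonneg_left (hHIle (n+2) i) (abs_nonneg _)
      _ = θ/2 * |c i| * q ^ i * M2 := by ring
  -- per-index integral of F
  have hper : ∀ i : ℕ, ∫ t in Ioi x, F i t
      = c i * (∫ t in Ioi x, H n i t) + (θ/2) * (c i * ∫ t in Ioi x, H (n+2) i t) := by
    intro i
    simp only [hFdef]
    rw [integral_add ((hHint n i).const_mul (c i))
      (((hHint (n+2) i).const_mul (c i)).const_mul (θ/2)),
      integral_const_mul, integral_const_mul, integral_const_mul]
  -- main identity
  have hmain : (∫ t in Set.Ioi x, t ^ n * exgdPdf α θ t) =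
      α * θ ^ 2 / (1 + θ) * (L1 α θ n θ x + θ / 2 * L2 α θ n θ x) := by
    rw [setIntegral_congr_fun measurableSet_Ioi hpt, integral_const_mul, ← hswap,
      tsum_congr hper, Summable.tsum_add hSum1 hSum2, tsum_congr hval1, tsum_mul_left,
      tsum_congr hval2]
    rw [show (L1 α θ n θ x : ℝ) = ∑' i : ℕ,
        ∑ j ∈ Finset.range (i+1), ∑ k ∈ Finset.range (j+1), ∑ l ∈ Finset.range (k+1),
          genChoose (α - 1) i * (i.choose j) * (j.choose k) * (k.choose l) *
            (-1 : ℝ) ^ i * θ ^ j * (θ / 2) ^ l *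
            uGamma ((n:ℝ) + k + l + 1) (x * (θ * i + θ)) /
            ((1 + θ) ^ i * (θ * i + θ) ^ ((n:ℝ) + (k : ℝ) + l + 1)) from rfl]
    rw [show (L2 α θ n θ x : ℝ) = ∑' i : ℕ,
        ∑ j ∈ Finset.range (i+1), ∑ k ∈ Finset.range (j+1), ∑ l ∈ Finset.range (k+1),
          genChoose (α - 1) i * (i.choose j) * (j.choose k) * (k.choose l) *
            (-1 : ℝ) ^ i * θ ^ j * (θ / 2) ^ l *
            uGamma ((n:ℝ) + 2 + k + l + 1) (x * (θ * i + θ)) /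
            ((1 + θ) ^ i * (θ * i + θ) ^ ((n:ℝ) + 2 + (k : ℝ) + l + 1)) from rfl]
  exact ⟨hmain, by rw [hmain]⟩
end
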